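/- (Theorem 2, undirected part of the LWF global Markov property for the induced chain graphs) Suppose μ satisfies the profile global Markov property (U-GMP) with respect to the profile undirected graph L. Then for every nonempty D ⊆ V that is disconnected in the skeleton of L, with skeleton connected components K_1, …, K_r, the random vectors Y_{K_1}, …, Y_{K_r} are mutually conditionally independent given the pair (Y_{V∖D}, X) under μ. -/

import Mathlib

open MeasureTheory ProbabilityTheory

instance cond_isFiniteMeasure {Ω : Type*} [MeasurableSpace Ω] (μ : Measure Ω) (s : Set Ω) :
    IsFiniteMeasure (μ[|s]) := by
  constructor
  unfold ProbabilityTheory.cond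
  simp only [Measure.smul_apply, smul_eq_mul, Measure.restrict_apply_univ]
  exact lt_of_le_of_lt (ENNReal.inv_mul_le_one _) ENNReal.one_lt_top

def restr {Ω : Type*} {V : Type*} {E : V → Type*} (Y : ∀ a, Ω → E a) (S : Set V) :
    Ω → ∀ a : S, E a := fun ω a => Y a ω

lemma measurable_restr {Ω : Type*} [MeasurableSpace Ω] {V : Type*} {E : V → Type*}
    [∀ a, MeasurableSpace (E a)] {Y : ∀ a, Ω → E a} (hY : ∀ a, Measurable (Y a)) (S : Set V) :
    Measurable (restr Y S) :=
  measurable_pi_lambda _ fun a => hY a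

/-- `C` separates `A` from `B` in `G`. -/
def Separates {V : Type*} (G : SimpleGraph V) (A B C : Set V) : Prop :=
  ∀ a ∈ A, ∀ b ∈ B, ∀ p : G.Walk a b, ∃ c ∈ p.support, c ∈ C

/-- Vertex set of a connected component of the subgraph induced on `D`. -/
def componentSet {V : Type*} (G : SimpleGraph V) (D : Set V)
    (c : (G.induce D).ConnectedComponent) : Set V :=
  Subtype.val '' {v : D | (G.induce D).connectedComponentMk v = c}

/-- The graph `U(x)` induced by a profile undirected graph `L`: distinct `a, b` are adjacent
iff `x ∉ L a b`. -/
def inducedGraph {V 𝒳 : Type*} (L : V → V → Set 𝒳) (hL : ∀ a b, L a b = L b a) (x : 𝒳) :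
    SimpleGraph V where
  Adj a b := a ≠ b ∧ x ∉ L a b
  symm := ⟨fun a b ⟨h1, h2⟩ => ⟨h1.symm, by rwa [hL b a]⟩⟩
  loopless := ⟨fun _ h => h.1 rfl⟩

section MarkovProperties

variable {Ω : Type*} [MeasurableSpace Ω] [StandardBorelSpace Ω] [Nonempty Ω]
  {V : Type*} [Fintype V]
  {𝒳 : Type*} [Fintype 𝒳] [Nonempty 𝒳] [MeasurableSpace 𝒳] [MeasurableSingletonClass 𝒳]
  {E : V → Type*} [∀ a, MeasurableSpace (E a)] [∀ a, StandardBorelSpace (E a)]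

/-- Profile undirected Global Markov Property. -/
def UGMP (Y : ∀ a, Ω → E a) (hY : ∀ a, Measurable (Y a)) (X : Ω → 𝒳) (μ : Measure Ω)
    (L : V → V → Set 𝒳) (hL : ∀ a b, L a b = L b a) : Prop :=
  ∀ (x : 𝒳) (A B C : Set V), A.Nonempty → B.Nonempty →
    Disjoint A B → Disjoint A C → Disjoint B C →
    Separates (inducedGraph L hL x) A B C →
    CondIndepFun (MeasurableSpace.comap (restr Y C) MeasurableSpace.pi)
      ((measurable_restr hY C).comap_le) (restr Y A) (restr Y B) (μ[|X ⁻¹' {x}])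

/-- Profile undirected Connected Set Markov Property. -/
def UCSMP (Y : ∀ a, Ω → E a) (hY : ∀ a, Measurable (Y a)) (X : Ω → 𝒳) (μ : Measure Ω)
    (L : V → V → Set 𝒳) (hL : ∀ a b, L a b = L b a) : Prop :=
  ∀ (x : 𝒳) (D : Set V), D.Nonempty → ¬ ((inducedGraph L hL x).induce D).Connected →
    iCondIndepFun (MeasurableSpace.comap (restr Y Dᶜ) MeasurableSpace.pi)
      ((measurable_restr hY Dᶜ).comap_le)
      (m := fun _ => MeasurableSpace.pi)
      (fun c : ((inducedGraph L hL x).induce D).ConnectedComponent =>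
        restr Y (componentSet (inducedGraph L hL x) D c))
      (μ[|X ⁻¹' {x}])

end MarkovProperties

/-- The skeleton of a profile undirected graph `L`: distinct `a, b` are adjacent iff
`L a b ≠ 𝒳`. -/
def skeleton {V 𝒳 : Type*} (L : V → V → Set 𝒳) (hL : ∀ a b, L a b = L b a) :
    SimpleGraph V where
  Adj a b := a ≠ b ∧ L a b ≠ Set.univ
  symm := ⟨fun a b ⟨h1, h2⟩ => ⟨h1.symm, by rwa [hL b a]⟩⟩
  loopless := ⟨fun _ h => h.1 rfl⟩

lemma inducedGraph_le_skeleton {V 𝒳 : Type*} (L : V → V → Set 𝒳) (hL : ∀ a b, L a b = L b a)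
    (x : 𝒳) : inducedGraph L hL x ≤ skeleton L hL := by
  intro a b hab
  exact ⟨hab.1, fun h => hab.2 (h ▸ Set.mem_univ x)⟩

lemma componentSet_nonempty {V : Type*} (G : SimpleGraph V) (D : Set V)
    (c : (G.induce D).ConnectedComponent) : (componentSet G D c).Nonempty := by
  obtain ⟨v, rfl⟩ := c.exists_rep
  exact ⟨v.1, v, rfl, rfl⟩

lemma componentSet_subset {V : Type*} (G : SimpleGraph V) (D : Set V)
    (c : (G.induce D).ConnectedComponent) : componentSet G D c ⊆ D := by
  rintro _ ⟨v, _, rfl⟩; exact v.2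

lemma componentSet_disjoint {V : Type*} (G : SimpleGraph V) (D : Set V)
    {c c' : (G.induce D).ConnectedComponent} (h : c ≠ c') :
    Disjoint (componentSet G D c) (componentSet G D c') := by
  rw [Set.disjoint_left]
  rintro _ ⟨v, hv, rfl⟩ ⟨w, hw, hvw⟩
  apply h
  rw [← hv, ← hw]
  congr 1
  exact Subtype.ext hvw.symm

lemma reachable_of_walk_subset {V : Type*} {U G : SimpleGraph V} (hUG : U ≤ G) (D : Set V) :
    ∀ {a b : V} (p : U.Walk a b), (∀ v ∈ p.support, v ∈ D) → ∀ (ha : a ∈ D) (hb : b ∈ D),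
      (G.induce D).Reachable ⟨a, ha⟩ ⟨b, hb⟩ := by
  intro a b p
  induction p with
  | nil => intro _ ha hb; exact SimpleGraph.Reachable.refl _
  | @cons a u b h q ih =>
    intro hsupp ha hb
    have hu : u ∈ D := hsupp u (by simp [SimpleGraph.Walk.support_cons,
      SimpleGraph.Walk.start_mem_support])
    have hadj : (G.induce D).Adj ⟨a, ha⟩ ⟨u, hu⟩ := hUG h
    exact hadj.reachable.trans (ih (fun v hv => hsupp v (by
      simp [SimpleGraph.Walk.support_cons, hv])) hu hb)

lemma mem_componentSet_iff {V : Type*} (G : SimpleGraph V) (D : Set V)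
    (c : (G.induce D).ConnectedComponent) (v : V) :
    v ∈ componentSet G D c ↔ ∃ h : v ∈ D, (G.induce D).connectedComponentMk ⟨v, h⟩ = c := by
  constructor
  · rintro ⟨w, hw, rfl⟩; exact ⟨w.2, hw⟩
  · rintro ⟨h, hc⟩; exact ⟨⟨v, h⟩, hc, rfl⟩

lemma separates_components {V 𝒳 : Type*} (L : V → V → Set 𝒳) (hL : ∀ a b, L a b = L b a)
    (x : 𝒳) (D : Set V) {c : ((skeleton L hL).induce D).ConnectedComponent}
    (S : Finset ((skeleton L hL).induce D).ConnectedComponent) (hc : c ∉ S) :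
    Separates (inducedGraph L hL x) (componentSet (skeleton L hL) D c)
      (⋃ c' ∈ S, componentSet (skeleton L hL) D c') Dᶜ := by
  intro a ha b hb p
  by_contra hcon
  push_neg at hcon
  have hsupp : ∀ v ∈ p.support, v ∈ D := fun v hv => by
    have := hcon v hv; simpa using this
  obtain ⟨haD, hac⟩ := (mem_componentSet_iff _ _ _ a).mp ha
  simp only [Set.mem_iUnion] at hb
  obtain ⟨c', hc', hbc⟩ := hb
  obtain ⟨hbD, hbc'⟩ := (mem_componentSet_iff _ _ _ b).mp hbc
  have hreach := reachable_of_walk_subset (inducedGraph_le_skeleton L hL x) D p hsupp haD hbD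
  have : c = c' := by
    rw [← hac, ← hbc']
    exact SimpleGraph.ConnectedComponent.sound hreach
  exact hc (this ▸ hc')
section CondLemma


variable {Ω γ 𝒳 : Type*} [mΩ : MeasurableSpace Ω] [MeasurableSpace γ]
  [Fintype 𝒳] [MeasurableSpace 𝒳] [MeasurableSingletonClass 𝒳]

lemma restrict_eq_smul_cond (μ : Measure Ω) (s : Set Ω) (h0 : μ s ≠ 0) (ht : μ s ≠ ⊤) :
    μ.restrict s = μ s • μ[|s] := by
  rw [ProbabilityTheory.cond, smul_smul, ENNReal.mul_inv_cancel h0 ht, one_smul]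

lemma cond_compl_zero (μ : Measure Ω) {s : Set Ω} (hs : MeasurableSet s) : μ[|s] sᶜ = 0 := by
  rw [ProbabilityTheory.cond, Measure.smul_apply, Measure.restrict_apply (hs.compl),
    Set.compl_inter_self, measure_empty, smul_zero]

lemma cond_isFiniteMeasure' (μ : Measure Ω) (s : Set Ω) : IsFiniteMeasure (μ[|s]) := by
  constructor
  rw [ProbabilityTheory.cond]
  simp only [Measure.smul_apply, smul_eq_mul, Measure.restrict_apply_univ]
  exact lt_of_le_of_lt (ENNReal.inv_mul_le_one _) ENNReal.one_lt_top

lemma condexp_prod_ae_eq_cond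
    (Z : Ω → γ) (hZ : Measurable Z) (X : Ω → 𝒳) (hX : Measurable X)
    (μ : Measure Ω) [IsProbabilityMeasure μ] (hXpos : ∀ x : 𝒳, μ (X ⁻¹' {x}) ≠ 0)
    {f : Ω → ℝ} (hf : Integrable f μ) (x : 𝒳) :
    μ[f | MeasurableSpace.comap (fun ω => (Z ω, X ω)) inferInstance]
      =ᵐ[μ[|X ⁻¹' {x}]] (μ[|X ⁻¹' {x}])[f | MeasurableSpace.comap Z inferInstance] := by
  set W : Ω → γ × 𝒳 := fun ω => (Z ω, X ω) with hW
  have hWm : Measurable W := hZ.prodMk hX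
  have hm'le : MeasurableSpace.comap W inferInstance ≤ mΩ := hWm.comap_le
  have hmZle : MeasurableSpace.comap Z inferInstance ≤ mΩ := hZ.comap_le
  have hmZm' : MeasurableSpace.comap Z inferInstance
      ≤ MeasurableSpace.comap W inferInstance := by
    rw [show Z = Prod.fst ∘ W from rfl, ← MeasurableSpace.comap_comp]
    exact MeasurableSpace.comap_mono le_sup_left
  have hXs : ∀ y : 𝒳, MeasurableSet (X ⁻¹' {y}) := fun y => hX (measurableSet_singleton y)
  have hXm' : ∀ y : 𝒳, MeasurableSet[MeasurableSpace.comap W inferInstance] (X ⁻¹' {y}) := by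
    intro y
    refine ⟨Set.univ ×ˢ {y}, MeasurableSet.univ.prod (measurableSet_singleton y), ?_⟩
    ext ω; simp [W, eq_comm]
  have hXtop : ∀ y : 𝒳, μ (X ⁻¹' {y}) ≠ ⊤ := fun y => measure_ne_top μ _
  set ν : 𝒳 → Measure Ω := fun y => μ[|X ⁻¹' {y}] with hν
  haveI : ∀ y, IsFiniteMeasure (ν y) := fun y => cond_isFiniteMeasure' μ _
  have hres : ∀ y, μ.restrict (X ⁻¹' {y}) = μ (X ⁻¹' {y}) • ν y :=
    fun y => restrict_eq_smul_cond μ _ (hXpos y) (hXtop y)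
  have hfν : ∀ y, Integrable f (ν y) := by
    intro y
    rw [hν]
    simp only [ProbabilityTheory.cond]
    exact (hf.restrict).smul_measure (by simp [hXtop y, hXpos y])
  set g : 𝒳 → Ω → ℝ := fun y => (ν y)[f | MeasurableSpace.comap Z inferInstance] with hg
  set h : Ω → ℝ := fun ω => ∑ y : 𝒳, (X ⁻¹' {y}).indicator (g y) ω with hh
  have hgint : ∀ y, Integrable (g y) (ν y) := fun y => integrable_condExp
  have hgintμ : ∀ y : 𝒳, Integrable ((X ⁻¹' {y}).indicator (g y)) μ := by
    intro y
    rw [integrable_indicator_iff (hXs y), IntegrableOn, hres y]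
    exact (hgint y).smul_measure (hXtop y)
  have hfind : ∀ y : 𝒳, Integrable ((X ⁻¹' {y}).indicator f) μ := by
    intro y
    rw [integrable_indicator_iff (hXs y)]
    exact hf.restrict
  have hhint : Integrable h μ := integrable_finset_sum _ (fun y _ => hgintμ y)
  have hkey : ∀ s : Set Ω, MeasurableSet[MeasurableSpace.comap W inferInstance] s → ∀ y : 𝒳,
      ∫ ω in s, (X ⁻¹' {y}).indicator (g y) ω ∂μ = ∫ ω in s, (X ⁻¹' {y}).indicator f ω ∂μ := by
    rintro s ⟨T, hT, rfl⟩ y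
    rw [setIntegral_indicator (hXs y), setIntegral_indicator (hXs y)]
    have hslice : MeasurableSet ((fun z => (z, y)) ⁻¹' T) := measurable_prodMk_right hT
    have hZT : MeasurableSet[MeasurableSpace.comap Z inferInstance]
        (Z ⁻¹' ((fun z => (z, y)) ⁻¹' T)) := ⟨_, hslice, rfl⟩
    have hinter : W ⁻¹' T ∩ X ⁻¹' {y} = (Z ⁻¹' ((fun z => (z, y)) ⁻¹' T)) ∩ X ⁻¹' {y} := by
      ext ω
      simp only [Set.mem_inter_iff, Set.mem_preimage, Set.mem_singleton_iff, W]
      constructor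
      · rintro ⟨h1, h2⟩; subst h2; exact ⟨h1, rfl⟩
      · rintro ⟨h1, h2⟩; subst h2; exact ⟨h1, rfl⟩
    rw [hinter]
    have hμres : ∀ (φ : Ω → ℝ),
        ∫ ω in Z ⁻¹' ((fun z => (z, y)) ⁻¹' T) ∩ X ⁻¹' {y}, φ ω ∂μ
          = (μ (X ⁻¹' {y})).toReal * ∫ ω in Z ⁻¹' ((fun z => (z, y)) ⁻¹' T), φ ω ∂(ν y) := by
      intro φ
      rw [← Measure.restrict_restrict (hmZle _ hZT), hres y, Measure.restrict_smul,
        integral_smul_measure, smul_eq_mul]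
    rw [hμres, hμres, setIntegral_condExp hmZle (hfν y) hZT]
  have hmeas : ∀ y : 𝒳, StronglyMeasurable[MeasurableSpace.comap W inferInstance]
      ((X ⁻¹' {y}).indicator (g y)) := fun y =>
    ((stronglyMeasurable_condExp).mono hmZm').indicator (hXm' y)
  have hhmeas : StronglyMeasurable[MeasurableSpace.comap W inferInstance] h :=
    Finset.stronglyMeasurable_fun_sum _ (fun y _ => hmeas y)
  have hmain : h =ᵐ[μ] μ[f | MeasurableSpace.comap W inferInstance] := by
    refine ae_eq_condExp_of_forall_setIntegral_eq hm'le hf ?_ ?_ (StronglyMeasurable.aestronglyMeasurable hhmeas)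
    · exact fun s _ _ => hhint.integrableOn
    · intro s hs _
      have hfs : f = fun ω => ∑ y : 𝒳, (X ⁻¹' {y}).indicator f ω := by
        funext ω
        rw [Finset.sum_eq_single (X ω)]
        · simp
        · intro y _ hy
          apply Set.indicator_of_notMem
          simp [Ne.symm hy]
        · simp
      calc ∫ ω in s, h ω ∂μ = ∑ y : 𝒳, ∫ ω in s, (X ⁻¹' {y}).indicator (g y) ω ∂μ :=
            integral_finset_sum _ (fun y _ => (hgintμ y).integrableOn)
        _ = ∑ y : 𝒳, ∫ ω in s, (X ⁻¹' {y}).indicator f ω ∂μ :=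
            Finset.sum_congr rfl (fun y _ => hkey s hs y)
        _ = ∫ ω in s, f ω ∂μ := by
            rw [← integral_finset_sum _ (fun y _ => (hfind y).integrableOn)]
            exact setIntegral_congr_fun (hm'le s hs) (fun ω _ => (congrFun hfs ω).symm)
  have h1 : h =ᵐ[ν x] μ[f | MeasurableSpace.comap W inferInstance] :=
    cond_absolutelyContinuous.ae_eq hmain
  have h2 : h =ᵐ[ν x] g x := by
    have hXx : (X ⁻¹' {x}) ∈ ae (ν x) := by
      rw [mem_ae_iff, hν, cond_compl_zero μ (hXs x)]
    filter_upwards [hXx] with ω hω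
    show (∑ y : 𝒳, (X ⁻¹' {y}).indicator (g y) ω) = g x ω
    rw [Finset.sum_eq_single x]
    · exact Set.indicator_of_mem hω _
    · intro y _ hy
      apply Set.indicator_of_notMem
      simp only [Set.mem_preimage, Set.mem_singleton_iff] at hω ⊢
      rw [hω]; exact Ne.symm hy
    · simp
  exact h1.symm.trans h2

end CondLemma

def projMap {V : Type*} {E : V → Type*} {K B : Set V} (h : K ⊆ B) :
    (∀ a : B, E a) → (∀ a : K, E a) := fun g a => g ⟨a.1, h a.2⟩

lemma measurable_projMap {V : Type*} {E : V → Type*} [∀ a, MeasurableSpace (E a)]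
    {K B : Set V} (h : K ⊆ B) : Measurable (projMap (E := E) h) :=
  measurable_pi_lambda _ fun a => measurable_pi_apply _

section PerX

variable {Ω : Type*} [mΩ : MeasurableSpace Ω] [StandardBorelSpace Ω] [Nonempty Ω]
  {V : Type*} [Fintype V]
  {𝒳 : Type*} [Fintype 𝒳] [Nonempty 𝒳] [MeasurableSpace 𝒳] [MeasurableSingletonClass 𝒳]
  {E : V → Type*} [∀ a, MeasurableSpace (E a)] [∀ a, StandardBorelSpace (E a)]

lemma perX_prod (Y : ∀ a, Ω → E a) (hY : ∀ a, Measurable (Y a))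
    (X : Ω → 𝒳) (μ : Measure Ω) [IsProbabilityMeasure μ]
    (L : V → V → Set 𝒳) (hL : ∀ a b, L a b = L b a)
    (h : UGMP Y hY X μ L hL) (x : 𝒳) (D : Set V)
    (S : Finset ((skeleton L hL).induce D).ConnectedComponent)
    (sets : ∀ c : ((skeleton L hL).induce D).ConnectedComponent,
      Set (∀ a : componentSet (skeleton L hL) D c, E a))
    (H : ∀ c ∈ S, MeasurableSet (sets c)) :
    ((μ[|X ⁻¹' {x}])⟦⋂ c ∈ S, restr Y (componentSet (skeleton L hL) D c) ⁻¹' sets c |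
        MeasurableSpace.comap (restr Y Dᶜ) MeasurableSpace.pi⟧)
      =ᵐ[μ[|X ⁻¹' {x}]]
    ∏ c ∈ S, ((μ[|X ⁻¹' {x}])⟦restr Y (componentSet (skeleton L hL) D c) ⁻¹' sets c |
        MeasurableSpace.comap (restr Y Dᶜ) MeasurableSpace.pi⟧) := by
  classical
  have hmZle : MeasurableSpace.comap (restr Y Dᶜ) MeasurableSpace.pi ≤ mΩ :=
    (measurable_restr hY Dᶜ).comap_le
  induction S using Finset.induction_on with
  | empty =>
    have he : (⋂ c ∈ (∅ : Finset ((skeleton L hL).induce D).ConnectedComponent),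
        restr Y (componentSet (skeleton L hL) D c) ⁻¹' sets c) = Set.univ := by
      simp
    rw [he, Finset.prod_empty]
    have h1 : ((μ[|X ⁻¹' {x}])⟦(Set.univ : Set Ω) |
        MeasurableSpace.comap (restr Y Dᶜ) MeasurableSpace.pi⟧) = fun _ => (1:ℝ) := by
      rw [Set.indicator_univ, condExp_const hmZle]
    rw [h1]
    filter_upwards with ω
    simp
  | @insert c S' hc ih =>
    specialize ih (fun c' hc' => H c' (Finset.mem_insert_of_mem hc'))
    rw [Finset.set_biInter_insert, Finset.prod_insert hc]
    rcases S'.eq_empty_or_nonempty with rfl | hS'ne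
    · have he : (⋂ c' ∈ (∅ : Finset ((skeleton L hL).induce D).ConnectedComponent),
          restr Y (componentSet (skeleton L hL) D c') ⁻¹' sets c') = Set.univ := by simp
      rw [he, Set.inter_univ, Finset.prod_empty, mul_one]
    · have hsubB : ∀ c' ∈ S', componentSet (skeleton L hL) D c' ⊆
          ⋃ c'' ∈ S', componentSet (skeleton L hL) D c'' :=
        fun c' hc' => Set.subset_biUnion_of_mem hc'
      have hBD : (⋃ c' ∈ S', componentSet (skeleton L hL) D c') ⊆ D :=
        Set.iUnion₂_subset fun c' _ => componentSet_subset _ _ _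
      have hAD : componentSet (skeleton L hL) D c ⊆ D := componentSet_subset _ _ _
      have hAne := componentSet_nonempty (skeleton L hL) D c
      obtain ⟨c0, hc0⟩ := hS'ne
      have hBne : (⋃ c' ∈ S', componentSet (skeleton L hL) D c').Nonempty :=
        (componentSet_nonempty (skeleton L hL) D c0).mono (hsubB c0 hc0)
      have hAB : Disjoint (componentSet (skeleton L hL) D c)
          (⋃ c' ∈ S', componentSet (skeleton L hL) D c') := by
        rw [Set.disjoint_iUnion₂_right]
        exact fun c' hc' => componentSet_disjoint _ _ (by rintro rfl; exact hc hc')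
      have hsep := separates_components L hL x D S' hc
      have hCI := h x (componentSet (skeleton L hL) D c)
        (⋃ c' ∈ S', componentSet (skeleton L hL) D c') Dᶜ hAne hBne hAB
        (Disjoint.mono_left hAD disjoint_compl_right)
        (Disjoint.mono_left hBD disjoint_compl_right) hsep
      rw [condIndepFun_iff_condExp_inter_preimage_eq_mul
        (measurable_restr hY _) (measurable_restr hY _)] at hCI
      have htm : MeasurableSet (⋂ c', ⋂ (hc' : c' ∈ S'),
          projMap (E := E) (hsubB c' hc') ⁻¹' sets c') :=
        MeasurableSet.iInter fun c' => MeasurableSet.iInter fun hc' =>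
          measurable_projMap _ (H c' (Finset.mem_insert_of_mem hc'))
      have hBt : (⋂ c' ∈ S', restr Y (componentSet (skeleton L hL) D c') ⁻¹' sets c')
          = restr Y (⋃ c' ∈ S', componentSet (skeleton L hL) D c') ⁻¹'
            (⋂ c', ⋂ (hc' : c' ∈ S'), projMap (E := E) (hsubB c' hc') ⁻¹' sets c') := by
        simp only [Set.preimage_iInter]
        rfl
      have h1 := hCI (sets c) _ (H c (Finset.mem_insert_self c S')) htm
      rw [hBt] at ih ⊢
      filter_upwards [h1, ih] with ω e1 e2
      rw [Pi.mul_apply, e1, e2]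

end PerX

lemma ae_of_forall_cond {Ω 𝒳 : Type*} [MeasurableSpace Ω] [Fintype 𝒳] [MeasurableSpace 𝒳]
    [MeasurableSingletonClass 𝒳] (μ : Measure Ω) [IsProbabilityMeasure μ]
    (X : Ω → 𝒳) (hX : Measurable X) (hXpos : ∀ x : 𝒳, μ (X ⁻¹' {x}) ≠ 0)
    {p : Ω → Prop} (hp : ∀ x : 𝒳, ∀ᵐ ω ∂(μ[|X ⁻¹' {x}]), p ω) : ∀ᵐ ω ∂μ, p ω := by
  rw [ae_iff]
  have hcov : {ω | ¬ p ω} = ⋃ x : 𝒳, {ω | ¬ p ω} ∩ X ⁻¹' {x} := by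
    ext ω; simp
  rw [hcov]
  refine le_antisymm (le_trans (measure_iUnion_le _) ?_) zero_le
  rw [tsum_fintype]
  refine le_of_eq (Finset.sum_eq_zero fun x _ => ?_)
  have h0 := hp x
  rw [ae_iff] at h0
  rw [← Measure.restrict_apply' (hX (measurableSet_singleton x)),
    restrict_eq_smul_cond μ _ (hXpos x) (measure_ne_top μ _), Measure.smul_apply, h0, smul_zero]

/-- **Theorem 2, undirected part of the LWF global Markov property.**
If `μ` satisfies the profile global Markov property with respect to `L`, then for every
nonempty `D ⊆ V` that is disconnected in the skeleton of `L`, the random vectors indexed by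
the connected components of `D` in the skeleton are mutually conditionally independent given
the pair `(Y_{V∖D}, X)` under `μ`. -/
theorem UGMP_implies_LWF_undirected
    {Ω : Type*} [MeasurableSpace Ω] [StandardBorelSpace Ω] [Nonempty Ω]
    {V : Type*} [Fintype V]
    {𝒳 : Type*} [Fintype 𝒳] [Nonempty 𝒳] [MeasurableSpace 𝒳] [MeasurableSingletonClass 𝒳]
    {E : V → Type*} [∀ a, MeasurableSpace (E a)] [∀ a, StandardBorelSpace (E a)]
    (Y : ∀ a, Ω → E a) (hY : ∀ a, Measurable (Y a))
    (X : Ω → 𝒳) (hX : Measurable X)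
    (μ : Measure Ω) [IsProbabilityMeasure μ] (hXpos : ∀ x : 𝒳, μ (X ⁻¹' {x}) ≠ 0)
    (L : V → V → Set 𝒳) (hL : ∀ a b, L a b = L b a)
    (h : UGMP Y hY X μ L hL) :
    ∀ D : Set V, D.Nonempty → ¬ ((skeleton L hL).induce D).Connected →
      iCondIndepFun
        (MeasurableSpace.comap (fun ω => (restr Y Dᶜ ω, X ω)) inferInstance)
        (((measurable_restr hY Dᶜ).prodMk hX).comap_le)
        (m := fun _ => MeasurableSpace.pi)
        (fun c : ((skeleton L hL).induce D).ConnectedComponent =>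
          restr Y (componentSet (skeleton L hL) D c))
        μ := by
  intro D _hD _hconn
  rw [iCondIndepFun_iff_condExp_inter_preimage_eq_mul _ _ (fun c => measurable_restr hY _)]
  intro S sets H
  have hEach : ∀ c ∈ S, MeasurableSet
      (restr Y (componentSet (skeleton L hL) D c) ⁻¹' sets c) :=
    fun c hc => measurable_restr hY _ (H c hc)
  have hIm : MeasurableSet
      (⋂ c ∈ S, restr Y (componentSet (skeleton L hL) D c) ⁻¹' sets c) :=
    MeasurableSet.biInter S.countable_toSet hEach
  apply ae_of_forall_cond μ X hX hXpos
  intro x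
  have key := perX_prod Y hY X μ L hL h x D S sets H
  have hAinter := condexp_prod_ae_eq_cond (restr Y Dᶜ) (measurable_restr hY Dᶜ) X hX μ hXpos
    ((integrable_const (1:ℝ)).indicator hIm) x
  have hterm : ∀ᵐ ω ∂(μ[|X ⁻¹' {x}]), ∀ c ∈ (S : Set _),
      ((μ[|X ⁻¹' {x}])⟦restr Y (componentSet (skeleton L hL) D c) ⁻¹' sets c |
        MeasurableSpace.comap (restr Y Dᶜ) MeasurableSpace.pi⟧) ω
      = (μ⟦restr Y (componentSet (skeleton L hL) D c) ⁻¹' sets c |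
        MeasurableSpace.comap (fun ω => (restr Y Dᶜ ω, X ω)) inferInstance⟧) ω := by
    refine (ae_ball_iff S.countable_toSet).mpr fun c hc => ?_
    exact (condexp_prod_ae_eq_cond (restr Y Dᶜ) (measurable_restr hY Dᶜ) X hX μ hXpos
      ((integrable_const (1:ℝ)).indicator (hEach c (Finset.mem_coe.mp hc))) x).symm
  refine (hAinter.trans (key.trans ?_))
  filter_upwards [hterm] with ω hω
  rw [Finset.prod_apply, Finset.prod_apply]
  exact Finset.prod_congr rfl (fun c hc => hω c (Finset.mem_coe.mpr hc))
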